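/- arXiv:2010.14308 — 4 statements merged into one kernel-verified Lean document; each statement's English description precedes it below -/
import Mathlib

section
/- Let μ > 0, λ ∈ ℝ with λ + 2μ > 0. Then for every symmetric 3×3 matrix S: μ‖S‖² + (λμ/(λ+2μ))·(tr S)² = μ‖dev S‖² + (2μ(2λ+μ)/(3(λ+2μ)))·(tr S)². Consequently, if in addition 2λ + μ > 0, then the quadratic form W(S) = μ‖S‖² + (λμ/(λ+2μ))(tr S)² satisfies c‖S‖² ≤ W(S) ≤ C‖S‖² with c = min{μ, 2μ(2λ+μ)/(λ+2μ)} > 0 and C = max{μ, 2μ(2λ+μ)/(λ+2μ)}, and W is positive definite on Sym(3). -/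
open Matrix

lemma trq (S : Matrix (Fin 3) (Fin 3) ℝ) :
    (S * Sᵀ).trace = ∑ i, ∑ j, (S i j)^2 := by
  simp [Matrix.trace, Matrix.mul_apply, Matrix.diag, sq]

lemma trq_nonneg (S : Matrix (Fin 3) (Fin 3) ℝ) : 0 ≤ (S * Sᵀ).trace := by
  rw [trq]
  exact Finset.sum_nonneg fun i _ => Finset.sum_nonneg fun j _ => sq_nonneg _

lemma trq_pos (S : Matrix (Fin 3) (Fin 3) ℝ) (hS : S ≠ 0) : 0 < (S * Sᵀ).trace := by
  rcases (trq_nonneg S).lt_or_eq with h | h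
  · exact h
  · exfalso; apply hS
    rw [trq] at h
    ext i j
    have h1 := (Finset.sum_eq_zero_iff_of_nonneg (fun i _ =>
      Finset.sum_nonneg fun j _ => sq_nonneg (S i j))).mp h.symm i (Finset.mem_univ i)
    have h2 := (Finset.sum_eq_zero_iff_of_nonneg (fun j _ => sq_nonneg (S i j))).mp h1 j
      (Finset.mem_univ j)
    simpa using pow_eq_zero_iff (n := 2) (by norm_num) |>.mp h2

lemma cauchy (S : Matrix (Fin 3) (Fin 3) ℝ) : S.trace ^ 2 ≤ 3 * (S * Sᵀ).trace := by
  rw [trq]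
  simp only [Matrix.trace, Matrix.diag, Fin.sum_univ_three]
  nlinarith [sq_nonneg (S 0 0 - S 1 1), sq_nonneg (S 0 0 - S 2 2), sq_nonneg (S 1 1 - S 2 2),
    sq_nonneg (S 0 1), sq_nonneg (S 0 2), sq_nonneg (S 1 0), sq_nonneg (S 1 2),
    sq_nonneg (S 2 0), sq_nonneg (S 2 1)]

lemma dev_trace (S : Matrix (Fin 3) (Fin 3) ℝ) (c : ℝ) :
    ((S - c • 1) * (S - c • 1)ᵀ).trace = (S * Sᵀ).trace - 2 * c * S.trace + 3 * c ^ 2 := by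
  have h1 : ((1 : Matrix (Fin 3) (Fin 3) ℝ)).trace = 3 := by simp
  simp only [transpose_sub, transpose_smul, transpose_one, sub_mul, mul_sub, trace_sub,
    smul_mul_assoc, mul_smul_comm, trace_smul, mul_one, one_mul, trace_transpose, h1, smul_eq_mul]
  ring

/-- for Lamé constants `μ > 0`, `λ + 2μ > 0`, the quadratic form
`W(S) = μ‖S‖² + (λμ/(λ+2μ))(tr S)²` on symmetric 3×3 matrices equals
`μ‖dev S‖² + (2μ(2λ+μ)/(3(λ+2μ)))(tr S)²`; if moreover `2λ+μ > 0` then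
`c‖S‖² ≤ W(S) ≤ C‖S‖²` with `c = min{μ, 2μ(2λ+μ)/(λ+2μ)} > 0`,
`C = max{μ, 2μ(2λ+μ)/(λ+2μ)}`, and `W` is positive definite on `Sym(3)`. -/
theorem Wshell_bounds (μ lam : ℝ) (hμ : 0 < μ) (hlam : 0 < lam + 2 * μ) :
    (∀ S : Matrix (Fin 3) (Fin 3) ℝ, S.IsSymm →
      μ * (S * Sᵀ).trace + (lam * μ / (lam + 2 * μ)) * S.trace ^ 2 =
        μ * ((S - (S.trace / 3) • 1) * (S - (S.trace / 3) • 1)ᵀ).trace +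
          (2 * μ * (2 * lam + μ) / (3 * (lam + 2 * μ))) * S.trace ^ 2) ∧
    (0 < 2 * lam + μ →
      (0 < min μ (2 * μ * (2 * lam + μ) / (lam + 2 * μ))) ∧
      ∀ S : Matrix (Fin 3) (Fin 3) ℝ, S.IsSymm →
        (min μ (2 * μ * (2 * lam + μ) / (lam + 2 * μ))) * (S * Sᵀ).trace ≤
            μ * (S * Sᵀ).trace + (lam * μ / (lam + 2 * μ)) * S.trace ^ 2 ∧
        μ * (S * Sᵀ).trace + (lam * μ / (lam + 2 * μ)) * S.trace ^ 2 ≤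
            (max μ (2 * μ * (2 * lam + μ) / (lam + 2 * μ))) * (S * Sᵀ).trace ∧
        (S ≠ 0 →
          0 < μ * (S * Sᵀ).trace + (lam * μ / (lam + 2 * μ)) * S.trace ^ 2)) := by
  have ha : (lam + 2 * μ) ≠ 0 := ne_of_gt hlam
  constructor
  · intro S _
    rw [dev_trace]
    field_simp
    linear_combination (-(S.trace ^ 2)) * mul_inv_cancel₀ ha
  · intro hb
    have hmpos : 0 < min μ (2 * μ * (2 * lam + μ) / (lam + 2 * μ)) :=
      lt_min hμ (div_pos (by nlinarith) hlam)
    refine ⟨hmpos, fun S _ => ?_⟩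
    set q := (S * Sᵀ).trace with hq
    set t := S.trace with ht
    have hqn : 0 ≤ q := trq_nonneg S
    have hcs : t ^ 2 ≤ 3 * q := cauchy S
    have hm1 : min μ (2 * μ * (2 * lam + μ) / (lam + 2 * μ)) ≤ μ := min_le_left _ _
    have hm2 : min μ (2 * μ * (2 * lam + μ) / (lam + 2 * μ)) ≤
        2 * μ * (2 * lam + μ) / (lam + 2 * μ) := min_le_right _ _
    have hM1 : μ ≤ max μ (2 * μ * (2 * lam + μ) / (lam + 2 * μ)) := le_max_left _ _
    have hM2 : 2 * μ * (2 * lam + μ) / (lam + 2 * μ) ≤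
        max μ (2 * μ * (2 * lam + μ) / (lam + 2 * μ)) := le_max_right _ _
    -- key identity: W = μ*(q - t^2/3) + (2μ(2λ+μ)/(λ+2μ)) * (t^2/3)
    have key : μ * q + (lam * μ / (lam + 2 * μ)) * t ^ 2 =
        μ * (q - t ^ 2 / 3) + (2 * μ * (2 * lam + μ) / (lam + 2 * μ)) * (t ^ 2 / 3) := by
      field_simp
      linear_combination (-(t ^ 2)) * mul_inv_cancel₀ ha
    have hd : 0 ≤ q - t ^ 2 / 3 := by linarith
    have ht2 : 0 ≤ t ^ 2 / 3 := by positivity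
    refine ⟨?_, ?_, ?_⟩
    · rw [key]
      nlinarith [mul_le_mul_of_nonneg_right hm1 hd, mul_le_mul_of_nonneg_right hm2 ht2]
    · rw [key]
      nlinarith [mul_le_mul_of_nonneg_right hM1 hd, mul_le_mul_of_nonneg_right hM2 ht2]
    · intro hS
      have hqp : 0 < q := trq_pos S hS
      have := mul_pos hmpos hqp
      nlinarith [mul_le_mul_of_nonneg_right hm1 hd, mul_le_mul_of_nonneg_right hm2 ht2]
end

section
/- Let a, b ∈ ℝ³ be linearly independent, n = (a × b)/‖a × b‖, P = (a | b | n), and let J be the 3×3 matrix with J₁₂ = 1, J₂₁ = -1 and all other entries zero. Define C = det(P)·P⁻ᵀ·J·P⁻¹. Then: (i) C is skew-symmetric; (ii) C² = -(𝟙₃ - n⊗n); and (iii) ‖C‖² = 2 (Frobenius norm). -/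
open Matrix

/-- The 3×3 matrix with columns `a`, `b`, `c`. -/
def col3 (a b c : Fin 3 → ℝ) : Matrix (Fin 3) (Fin 3) ℝ :=
  Matrix.of fun i j => ![a, b, c] j i

lemma det_col3 (a b c : Fin 3 → ℝ) : (col3 a b c).det = (crossProduct a b) ⬝ᵥ c := by
  simp [col3, Matrix.det_fin_three, crossProduct, dotProduct, Fin.sum_univ_three]
  ring

lemma key_lemma (a b n : Fin 3 → ℝ) :
    (col3 a b n)ᵀ * !![0, n 2, -(n 1); -(n 2), 0, n 0; n 1, -(n 0), 0] * (col3 a b n)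
      = ((crossProduct a b) ⬝ᵥ n) • !![0, 1, 0; -1, 0, 0; 0, 0, 0] := by
  ext i j
  fin_cases i <;> fin_cases j <;>
    simp [col3, Matrix.mul_apply, Fin.sum_univ_three, crossProduct, dotProduct,
      vecHead, vecTail] <;> ring

/-- for linearly independent `a, b`, unit normal `n = (a×b)/‖a×b‖`,
`P = (a|b|n)` and `J` with `J₁₂ = 1`, `J₂₁ = -1`, rest zero, the alternator tensor
`C = det(P)·P⁻ᵀ J P⁻¹` is skew-symmetric, satisfies `C² = -(𝟙₃ - n⊗n)`,
and `‖C‖² = tr(C Cᵀ) = 2`. -/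
theorem alternator_tensor (a b n : Fin 3 → ℝ) (P C : Matrix (Fin 3) (Fin 3) ℝ)
    (hab : LinearIndependent ℝ ![a, b])
    (hn : n = (Real.sqrt ((crossProduct a b) ⬝ᵥ (crossProduct a b)))⁻¹ • (crossProduct a b))
    (hP : P = col3 a b n)
    (hC : C = P.det • ((P⁻¹)ᵀ * !![0, 1, 0; -1, 0, 0; 0, 0, 0] * P⁻¹)) :
    Cᵀ = -C ∧
    C * C = -(1 - vecMulVec n n) ∧
    (C * Cᵀ).trace = 2 := by
  set c := crossProduct a b with hc
  have hc0 : c ≠ 0 := crossProduct_ne_zero_iff_linearIndependent.mpr hab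
  have hccnn : (0:ℝ) ≤ c ⬝ᵥ c := by
    simp only [dotProduct, Fin.sum_univ_three]
    nlinarith [sq_nonneg (c 0), sq_nonneg (c 1), sq_nonneg (c 2)]
  have hcc : (0:ℝ) < c ⬝ᵥ c := by
    rcases hccnn.lt_or_eq with h | h
    · exact h
    · exact absurd (dotProduct_self_eq_zero.mp h.symm) hc0
  set s := Real.sqrt (c ⬝ᵥ c) with hsdef
  have hs2 : s ^ 2 = c ⬝ᵥ c := Real.sq_sqrt hccnn
  have hs0 : 0 < s := Real.sqrt_pos.mpr hcc
  have hn1 : n ⬝ᵥ n = 1 := by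
    rw [hn, smul_dotProduct, dotProduct_smul, smul_eq_mul, smul_eq_mul, ← hs2]
    field_simp
  have hdet : P.det = s := by
    rw [hP, det_col3, hn, dotProduct_smul, smul_eq_mul, ← hs2]
    field_simp
  have hdet0 : P.det ≠ 0 := by rw [hdet]; exact hs0.ne'
  have hu : IsUnit P.det := isUnit_iff_ne_zero.mpr hdet0
  have e2 : P * P⁻¹ = 1 := Matrix.mul_nonsing_inv P hu
  have e1 : (P⁻¹)ᵀ * Pᵀ = 1 := by
    rw [← Matrix.transpose_mul, e2, Matrix.transpose_one]
  set K : Matrix (Fin 3) (Fin 3) ℝ :=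
    !![0, n 2, -(n 1); -(n 2), 0, n 0; n 1, -(n 0), 0] with hKdef
  have hPK : Pᵀ * K * P = P.det • !![0, 1, 0; -1, 0, 0; 0, 0, 0] := by
    rw [hP, hKdef, key_lemma, ← det_col3 a b n, ← hP]
  have hCK : C = K := by
    rw [hC, ← Matrix.smul_mul, ← Matrix.mul_smul, ← hPK]
    calc (P⁻¹)ᵀ * (Pᵀ * K * P) * P⁻¹
        = ((P⁻¹)ᵀ * Pᵀ) * K * (P * P⁻¹) := by
          simp only [Matrix.mul_assoc]
      _ = K := by rw [e1, e2, Matrix.one_mul, Matrix.mul_one]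
  have h3 : n 0 * n 0 + n 1 * n 1 + n 2 * n 2 = 1 := by
    simpa [dotProduct, Fin.sum_univ_three] using hn1
  subst hCK
  refine ⟨?_, ?_, ?_⟩
  · ext i j
    fin_cases i <;> fin_cases j <;> simp [hKdef]
  · ext i j
    fin_cases i <;> fin_cases j <;>
      simp [hKdef, Matrix.mul_apply, Fin.sum_univ_three, vecMulVec, Matrix.one_apply,
        Matrix.sub_apply, Matrix.neg_apply] <;>
    (first | ring1 | linear_combination h3 | linear_combination -h3)
  · simp only [Matrix.trace, Matrix.diag, Fin.sum_univ_three, Matrix.mul_apply,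
      Matrix.transpose_apply, hKdef]
    norm_num [Matrix.cons_val_zero, Matrix.cons_val_one, Matrix.cons_val_two, vecHead, vecTail]
    linear_combination 2 * h3
end

section
/- Let t₁, t₂, n₀ ∈ ℝ³ with ‖n₀‖ = 1, ⟨n₀,t₁⟩ = ⟨n₀,t₂⟩ = 0, and P = (t₁ | t₂ | n₀) invertible. Let m₁, m₂ ∈ ℝ³ and suppose U := (m₁ | m₂ | n₀)·P⁻¹ is symmetric positive definite. Then: (i) U·n₀ = n₀; (ii) P⁻ᵀ·I_m♭·P⁻¹ = (U - n₀⊗n₀)², where I_m♭ = (m₁|m₂|0)ᵀ·(m₁|m₂|0); and (iii) (P⁻ᵀ·Î_m·P⁻¹)^{-1/2} = U⁻¹, where Î_m = (m₁|m₂|n₀)ᵀ·(m₁|m₂|n₀). -/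
open Matrix

open scoped ComplexOrder in
/-- The square root of a positive semidefinite matrix, as defined in the older Mathlib
(`Matrix.PosSemidef.sqrt`, since removed). -/
noncomputable def Matrix.PosSemidef.sqrt {n 𝕜 : Type*} [Fintype n] [RCLike 𝕜] [DecidableEq n]
    {A : Matrix n n 𝕜} (hA : A.PosSemidef) : Matrix n n 𝕜 :=
  hA.1.eigenvectorUnitary.1 * diagonal ((↑) ∘ Real.sqrt ∘ hA.1.eigenvalues) *
    (star hA.1.eigenvectorUnitary : Matrix n n 𝕜)

lemma vecMulVec_mul_aux (a b : Fin 3 → ℝ) (C : Matrix (Fin 3) (Fin 3) ℝ) :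
    vecMulVec a b * C = vecMulVec a (b ᵥ* C) := by
  ext i j
  simp [vecMulVec, Matrix.mul_apply, Matrix.vecMul, dotProduct, Finset.mul_sum, mul_assoc]

lemma vecMulVec_transpose_aux (a b : Fin 3 → ℝ) :
    (vecMulVec a b)ᵀ = vecMulVec b a := by
  ext i j; simp [vecMulVec, mul_comm]

/-- pure elastic stretch leaving the normal unaltered.
If `P = (t₁|t₂|n₀)` is invertible with unit `n₀` orthogonal to `t₁, t₂` and
`U = (m₁|m₂|n₀) P⁻¹` is symmetric positive definite, then `U n₀ = n₀`,
`P⁻ᵀ I_m♭ P⁻¹ = (U - n₀⊗n₀)²`, and `(P⁻ᵀ Î_m P⁻¹)^{-1/2} = U⁻¹`. -/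
theorem pure_stretch_fundamental_forms (t₁ t₂ n₀ m₁ m₂ : Fin 3 → ℝ)
    (U : Matrix (Fin 3) (Fin 3) ℝ)
    (hn : n₀ ⬝ᵥ n₀ = 1) (h1 : n₀ ⬝ᵥ t₁ = 0) (h2 : n₀ ⬝ᵥ t₂ = 0)
    (hP : IsUnit (col3 t₁ t₂ n₀).det)
    (hU : U = col3 m₁ m₂ n₀ * (col3 t₁ t₂ n₀)⁻¹)
    (hUpd : U.PosDef) :
    U.mulVec n₀ = n₀ ∧
    ((col3 t₁ t₂ n₀)⁻¹)ᵀ * ((col3 m₁ m₂ 0)ᵀ * col3 m₁ m₂ 0) * (col3 t₁ t₂ n₀)⁻¹ =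
      (U - vecMulVec n₀ n₀) * (U - vecMulVec n₀ n₀) ∧
    ∀ h : (((col3 t₁ t₂ n₀)⁻¹)ᵀ * ((col3 m₁ m₂ n₀)ᵀ * col3 m₁ m₂ n₀) *
        (col3 t₁ t₂ n₀)⁻¹).PosSemidef,
      (h.sqrt)⁻¹ = U⁻¹ := by
  simp only [dotProduct, Fin.sum_univ_three] at hn h1 h2
  set P := col3 t₁ t₂ n₀ with hPdef
  set M := col3 m₁ m₂ n₀ with hMdef
  set M₀ := col3 m₁ m₂ 0 with hM0def
  have hPP : P * P⁻¹ = 1 := Matrix.mul_nonsing_inv P hP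
  have hPP' : P⁻¹ * P = 1 := Matrix.nonsing_inv_mul P hP
  have hPe : P.mulVec ![0,0,1] = n₀ := by
    ext i
    simp [hPdef, col3, Matrix.mulVec, dotProduct, Fin.sum_univ_three]
  have hMe : M.mulVec ![0,0,1] = n₀ := by
    ext i
    simp [hMdef, col3, Matrix.mulVec, dotProduct, Fin.sum_univ_three]
  have hvP : n₀ ᵥ* P = ![0,0,1] := by
    ext j
    fin_cases j <;>
      simp [hPdef, col3, Matrix.vecMul, dotProduct, Fin.sum_univ_three, h1, h2, hn]
  have hPinv_n : P⁻¹.mulVec n₀ = ![0,0,1] := by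
    rw [← hPe, Matrix.mulVec_mulVec, hPP', Matrix.one_mulVec]
  have hvPinv : (![0,0,1] : Fin 3 → ℝ) ᵥ* P⁻¹ = n₀ := by
    have h := congrArg (· ᵥ* P⁻¹) hvP
    simpa [Matrix.vecMul_vecMul, hPP] using h.symm
  -- (i)
  have part1 : U.mulVec n₀ = n₀ := by
    rw [hU, ← Matrix.mulVec_mulVec, hPinv_n, hMe]
  -- key identity for (ii)
  have hM0 : M₀ = M - vecMulVec n₀ ![0,0,1] := by
    ext i j
    fin_cases j <;> simp [hM0def, hMdef, col3, vecMulVec]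
  have key : M₀ * P⁻¹ = U - vecMulVec n₀ n₀ := by
    rw [hM0, Matrix.sub_mul, ← hU, vecMulVec_mul_aux, hvPinv]
  have hUsymm : Uᵀ = U := hUpd.1
  have hSsymm : (U - vecMulVec n₀ n₀)ᵀ = U - vecMulVec n₀ n₀ := by
    rw [Matrix.transpose_sub, hUsymm, vecMulVec_transpose_aux]
  have part2 : (P⁻¹)ᵀ * (M₀ᵀ * M₀) * P⁻¹ =
      (U - vecMulVec n₀ n₀) * (U - vecMulVec n₀ n₀) := by
    have : (P⁻¹)ᵀ * (M₀ᵀ * M₀) * P⁻¹ = (M₀ * P⁻¹)ᵀ * (M₀ * P⁻¹) := by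
      rw [Matrix.transpose_mul]; simp only [Matrix.mul_assoc]
    rw [this, key, hSsymm]
  -- (iii)
  have hA : (P⁻¹)ᵀ * (Mᵀ * M) * P⁻¹ = U ^ 2 := by
    have : (P⁻¹)ᵀ * (Mᵀ * M) * P⁻¹ = (M * P⁻¹)ᵀ * (M * P⁻¹) := by
      rw [Matrix.transpose_mul]; simp only [Matrix.mul_assoc]
    rw [this, ← hU, hUsymm, sq]
  refine ⟨part1, part2, fun h => ?_⟩
  have hsq : h.sqrt = U := by
    have hsq' : h.sqrt = cfc Real.sqrt ((P⁻¹)ᵀ * (Mᵀ * M) * P⁻¹) := by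
      rw [h.1.cfc_eq]; rfl
    rw [hsq', hA, ← cfc_comp_pow Real.sqrt 2 U (ha := hUpd.1.isSelfAdjoint)]
    have hs : ∀ x ∈ spectrum ℝ U, 0 ≤ x := by
      intro x hx
      obtain ⟨i, rfl⟩ := hUpd.1.spectrum_real_eq_range_eigenvalues ▸ hx
      exact hUpd.posSemidef.eigenvalues_nonneg i
    rw [cfc_congr (f := fun x : ℝ => Real.sqrt (x ^ 2)) (g := id)
      (fun x hx => Real.sqrt_sq (hs x hx)), cfc_id ℝ U hUpd.1.isSelfAdjoint]
  rw [hsq]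
end

section
/- Under the same pure-elastic-stretch hypotheses (P = (t₁|t₂|n₀) invertible, n₀ unit orthogonal to t₁,t₂, and U := (m₁|m₂|n₀)·P⁻¹ ∈ Sym⁺(3)), and with II_m♭ = -(m₁|m₂|0)ᵀ(ν₁|ν₂|0) and II_{y₀}♭ = -(t₁|t₂|0)ᵀ(ν₁|ν₂|0), the Koiter bending difference satisfies P⁻ᵀ·(II_m♭ - II_{y₀}♭)·P⁻¹ = -(U - 𝟙₃)·(ν₁|ν₂|0)·P⁻¹. In particular, it need not vanish when U ≠ 𝟙₃, so the Koiter bending tensor II_m - II_{y₀} does not satisfy the invariance requirement AR3*. -/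
open Matrix

/-- for a pure elastic stretch leaving the normal unaltered, the Koiter
bending difference satisfies
`P⁻ᵀ (II_m♭ - II_{y₀}♭) P⁻¹ = -(U - 𝟙₃)·(ν₁|ν₂|0)·P⁻¹`,
so it need not vanish when `U ≠ 𝟙₃`. -/
theorem koiter_bending_formula (t₁ t₂ n₀ m₁ m₂ ν₁ ν₂ : Fin 3 → ℝ)
    (P U : Matrix (Fin 3) (Fin 3) ℝ)
    (hn : n₀ ⬝ᵥ n₀ = 1) (h1 : n₀ ⬝ᵥ t₁ = 0) (h2 : n₀ ⬝ᵥ t₂ = 0)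
    (hPdef : P = col3 t₁ t₂ n₀) (hP : IsUnit P.det)
    (hU : U = col3 m₁ m₂ n₀ * P⁻¹) (hUpd : U.PosDef) :
    (P⁻¹)ᵀ * ((-((col3 m₁ m₂ 0)ᵀ * col3 ν₁ ν₂ 0)) -
        (-((col3 t₁ t₂ 0)ᵀ * col3 ν₁ ν₂ 0))) * P⁻¹ =
      -((U - 1) * (col3 ν₁ ν₂ 0 * P⁻¹)) := by
  set M := col3 m₁ m₂ n₀ with hM
  set N := col3 ν₁ ν₂ 0 with hN
  have hUsym : Uᵀ = U := by
    have h := hUpd.1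
    simpa [Matrix.IsHermitian, Matrix.conjTranspose_eq_transpose_of_trivial] using h
  have hdiff : col3 t₁ t₂ 0 - col3 m₁ m₂ 0 = P - M := by
    rw [hPdef, hM]
    ext i j
    fin_cases j <;> simp [col3]
  have hstep : (-((col3 m₁ m₂ 0)ᵀ * N)) - (-((col3 t₁ t₂ 0)ᵀ * N)) =
      (P - M)ᵀ * N := by
    rw [← hdiff, Matrix.transpose_sub, Matrix.sub_mul]
    noncomm_ring
  rw [hstep]
  have hPinv : (P⁻¹)ᵀ * Pᵀ = 1 := by
    rw [← Matrix.transpose_mul, Matrix.mul_nonsing_inv P hP, Matrix.transpose_one]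
  have hPM : (P⁻¹)ᵀ * (P - M)ᵀ = 1 - U := by
    rw [Matrix.transpose_sub, Matrix.mul_sub, hPinv, ← hUsym, hU, Matrix.transpose_mul]
  calc (P⁻¹)ᵀ * ((P - M)ᵀ * N) * P⁻¹
      = ((P⁻¹)ᵀ * (P - M)ᵀ) * (N * P⁻¹) := by noncomm_ring
    _ = (1 - U) * (N * P⁻¹) := by rw [hPM]
    _ = -((U - 1) * (N * P⁻¹)) := by noncomm_ring
end
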